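/- Let q be an odd prime power and a, b ∈ F_{q^2} with ab(a - b^{1-q}) ≠ 0, 1 - 4a/b^2 a nonzero square of F_q (in particular a/b^2 ∈ F_q), and b^2 - a^2 b^{q-1} - 3a = 0. Then a + b + 1 ≠ 0. -/

import Mathlib

/-- For odd prime power `q` and `a, b ∈ F_{q²}` with `ab(a - b^(1-q)) ≠ 0`,
`a/b² ∈ F_q` with `1 - 4a/b²` a nonzero square of `F_q`, and
`b² - a² b^(q-1) - 3a = 0`, we have `a + b + 1 ≠ 0`. -/
theorem stmt_14 (p n q : ℕ) (hp : p.Prime) (hn : 0 < n) (hq : q = p ^ n)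
    (hodd : Odd q)
    (F : Type*) [Field F] [Fintype F] (hcard : Fintype.card F = q ^ 2)
    (a b : F) (ha : a ≠ 0) (hb : b ≠ 0) (hab : a ≠ b * (b ^ q)⁻¹)
    (he : (a / b ^ 2) ^ q = a / b ^ 2)
    (hsq : ∃ c : F, c ≠ 0 ∧ c ^ q = c ∧ c ^ 2 = 1 - 4 * a / b ^ 2)
    (heq : b ^ 2 - a ^ 2 * b ^ (q - 1) - 3 * a = 0) :
    a + b + 1 ≠ 0 := by
  intro h
  obtain ⟨c, hc0, hcq, hc2⟩ := hsq
  -- p is odd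
  have hpodd : Odd p := by
    rw [← Nat.not_even_iff_odd] at hodd ⊢
    intro hev
    exact hodd (hq ▸ (Nat.even_pow.mpr ⟨hev, hn.ne'⟩))
  -- characteristic is p
  have hr := ringChar.charP F
  have hrP : (ringChar F).Prime := CharP.char_is_prime F _
  obtain ⟨m, hm⟩ := FiniteField.card F (ringChar F)
  have hdvd : ringChar F ∣ p ^ (n * 2) := by
    have hd : ringChar F ∣ Fintype.card F := hm.2 ▸ dvd_pow_self _ m.pos.ne'
    rwa [hcard, hq, ← pow_mul] at hd
  have hrp : ringChar F = p :=
    (Nat.prime_dvd_prime_iff_eq hrP hp).mp (hrP.dvd_of_dvd_pow hdvd)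
  haveI hcharp : CharP F p := hrp ▸ hr
  haveI : Fact p.Prime := ⟨hp⟩
  have h2 : (2 : F) ≠ 0 := by
    intro h2'
    have hpd : p ∣ 2 := (CharP.cast_eq_zero_iff F p 2).mp (by exact_mod_cast h2')
    have hp2 : p = 2 := (Nat.prime_dvd_prime_iff_eq hp Nat.prime_two).mp hpd
    rw [hp2] at hpodd
    exact (Nat.not_even_iff_odd.mpr hpodd) even_two
  have hb2 : b ^ 2 ≠ 0 := pow_ne_zero 2 hb
  set u : F := a / b ^ 2 with hu
  have hu0 : u ≠ 0 := div_ne_zero ha hb2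
  have haub : a = u * b ^ 2 := by rw [hu, div_mul_cancel₀ a hb2]
  have hquad : u * b ^ 2 + b + 1 = 0 := by rw [← haub]; exact h
  have hkey : (2 * u * b + 1) ^ 2 = c ^ 2 := by
    have h4u : (4 : F) * a / b ^ 2 = 4 * u := by rw [hu]; ring
    rw [hc2, h4u]
    linear_combination 4 * u * hquad
  have hk : 2 * u * b + 1 = c ∨ 2 * u * b + 1 = -c := sq_eq_sq_iff_eq_or_eq_neg.mp hkey
  have hkq : (2 * u * b + 1) ^ q = 2 * u * b + 1 := by
    rcases hk with hk | hk <;> rw [hk]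
    · exact hcq
    · rw [hodd.neg_pow, hcq]
  have hfrob : ∀ x y : F, (x + y) ^ q = x ^ q + y ^ q := by
    intro x y
    rw [hq]
    exact add_pow_char_pow x y p n
  have h2q : (2 : F) ^ q = 2 := by
    have h11 : ((2:F)) = 1 + 1 := by norm_num
    rw [h11, hfrob, one_pow]
  have hbq : b ^ q = b := by
    have hexp : (2 * u * b + 1) ^ q = 2 * u * b ^ q + 1 := by
      rw [hfrob, one_pow, mul_pow, mul_pow, h2q, he]
    rw [hexp] at hkq
    have h2u : (2 : F) * u ≠ 0 := mul_ne_zero h2 hu0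
    exact mul_left_cancel₀ h2u (add_right_cancel hkq)
  have hq1 : b ^ (q - 1) = 1 := by
    have hq0 : 1 ≤ q := by rw [hq]; exact Nat.one_le_pow _ _ hp.pos
    have hmul : b ^ (q - 1) * b = 1 * b := by
      rw [← pow_succ, Nat.sub_add_cancel hq0, hbq, one_mul]
    exact mul_right_cancel₀ hb hmul
  rw [hq1, mul_one] at heq
  have hbv : b = -2 := by linear_combination heq + (a - b + 2) * h
  have hav : a = 1 := by rw [hbv] at h; linear_combination h
  rw [hav, hbv] at hc2
  have h4 : (4 : F) ≠ 0 := by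
    intro h4
    apply h2
    have h22 : (2:F) * 2 = 0 := by rw [show (2:F)*2 = 4 by norm_num, h4]
    exact mul_self_eq_zero.mp h22
  have hc20 : c ^ 2 = 0 := by
    rw [hc2, show ((-2:F))^2 = 4 from by norm_num, mul_one, div_self h4, sub_self]
  exact hc0 ((pow_eq_zero_iff two_ne_zero).mp hc20)
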